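/- Let A₁,…,A_{n+2} be points in ℝⁿ in general position and let α₁,…,α_{n+2} be nonzero reals with Σᵢ αᵢ = 0 and Σᵢ αᵢAᵢ = 0. Then, with vol denoting n-dimensional Lebesgue measure, Σ_{i : αᵢ > 0} vol(conv{A_j : j ≠ i}) = Σ_{i : αᵢ < 0} vol(conv{A_j : j ≠ i}) = vol(conv{A₁,…,A_{n+2}}); i.e., the n-faces of the degenerate (n+1)-simplex split into two groups according to the sign of the coefficient of the omitted vertex, and the total volume of each group equals the volume of the convex hull of all n+2 points. -/

import Mathlib

open MeasureTheory

/-- Points `A₁, …, A_m` in `ℝ^d` are in general position if every `d+1` of them are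
affinely independent. -/
def InGeneralPosition {d m : ℕ} (A : Fin m → EuclideanSpace ℝ (Fin d)) : Prop :=
  ∀ s : Finset (Fin m), s.card = d + 1 → AffineIndependent ℝ (fun i : ↥s => A i.1)

open Finset in
/-- Membership in the convex hull of an image of a finite index set, in terms of weights. -/
lemma mem_convexHull_image_iff' {n m : ℕ} (A : Fin m → EuclideanSpace ℝ (Fin n))
    (S : Set (Fin m)) (x : EuclideanSpace ℝ (Fin n)) :
    x ∈ convexHull ℝ (A '' S) ↔ ∃ w : Fin m → ℝ, (∀ j, 0 ≤ w j) ∧ (∀ j ∉ S, w j = 0) ∧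
      ∑ j, w j = 1 ∧ ∑ j, w j • A j = x := by
  classical
  constructor
  · intro hx
    rw [Set.image_eq_range, convexHull_range_eq_exists_affineCombination] at hx
    obtain ⟨s, w', hw0, hw1, hx⟩ := hx
    refine ⟨fun j => ∑ k ∈ s, if (k : Fin m) = j then w' k else 0, ?_, ?_, ?_, ?_⟩
    · intro j
      refine Finset.sum_nonneg fun k hk => ?_
      split
      · exact hw0 k hk
      · exact le_refl 0
    · intro j hj
      refine Finset.sum_eq_zero fun k _ => ?_
      have : (k : Fin m) ≠ j := fun h => hj (h ▸ k.2)
      rw [if_neg this]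
    · rw [Finset.sum_comm]
      rw [← hw1]
      refine Finset.sum_congr rfl fun k _ => ?_
      simp
    · have hx' : ∑ k ∈ s, w' k • A k = x := by
        rw [← hx, affineCombination_eq_linear_combination s _ _ hw1]
      rw [← hx']
      simp only [Finset.sum_smul, ite_smul, zero_smul]
      rw [Finset.sum_comm]
      refine Finset.sum_congr rfl fun k _ => ?_
      simp
  · rintro ⟨w, hw0, hwS, hw1, hx⟩
    have hsub : Finset.univ.filter (· ∈ S) ⊆ Finset.univ := Finset.filter_subset _ _
    have hzero : ∀ j ∈ Finset.univ, j ∉ Finset.univ.filter (· ∈ S) → w j = 0 := by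
      intro j _ hj
      exact hwS j (by simpa using hj)
    have hzero' : ∀ j ∈ Finset.univ, j ∉ Finset.univ.filter (· ∈ S) → w j • A j = 0 := by
      intro j h1 h2; rw [hzero j h1 h2, zero_smul]
    have hsum1 : ∑ j ∈ Finset.univ.filter (· ∈ S), w j = 1 := by
      rw [Finset.sum_subset hsub hzero]; exact hw1
    have hsumx : ∑ j ∈ Finset.univ.filter (· ∈ S), w j • A j = x := by
      rw [Finset.sum_subset hsub hzero']; exact hx
    have := Finset.centerMass_mem_convexHull (Finset.univ.filter (· ∈ S)) (w := w) (z := A)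
      (fun i hi => hw0 i) (by rw [hsum1]; norm_num)
      (fun i hi => Set.mem_image_of_mem A (by simpa using hi))
    rwa [Finset.centerMass_eq_of_sum_1 _ _ hsum1, hsumx] at this

/-- Uniqueness (up to scalar) of the affine dependence among points in general position. -/
lemma dep_unique {n : ℕ} (A : Fin (n + 2) → EuclideanSpace ℝ (Fin n))
    (hgp : InGeneralPosition A)
    (α : Fin (n + 2) → ℝ) (hα : ∀ i, α i ≠ 0)
    (hsum : ∑ i, α i = 0) (hsum2 : ∑ i, α i • A i = 0)
    (β : Fin (n + 2) → ℝ) (hb1 : ∑ j, β j = 0) (hb2 : ∑ j, β j • A j = 0) :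
    ∃ c : ℝ, ∀ j, β j = c * α j := by
  classical
  set c := β 0 / α 0 with hc
  set γ : Fin (n + 2) → ℝ := fun j => β j - c * α j with hγ
  have hγ0 : γ 0 = 0 := by
    simp only [hγ, hc]
    rw [div_mul_cancel₀ _ (hα 0), sub_self]
  have hγ1 : ∑ j, γ j = 0 := by
    simp only [hγ]
    rw [Finset.sum_sub_distrib, ← Finset.mul_sum, hsum, hb1, mul_zero, sub_zero]
  have hγ2 : ∑ j, γ j • A j = 0 := by
    have : ∀ j, γ j • A j = β j • A j - c • (α j • A j) := by
      intro j
      simp only [hγ]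
      rw [sub_smul, mul_smul]
    simp only [this]
    rw [Finset.sum_sub_distrib, ← Finset.smul_sum, hsum2, hb2, smul_zero, sub_zero]
  set s : Finset (Fin (n + 2)) := Finset.univ.erase 0 with hs
  have hcard : s.card = n + 1 := by
    rw [hs, Finset.card_erase_of_mem (Finset.mem_univ _), Finset.card_univ, Fintype.card_fin]
    omega
  have hai := hgp s hcard
  rw [affineIndependent_iff] at hai
  have hkey := hai Finset.univ (fun i => γ i.1) ?_ ?_
  · have hall : ∀ j, γ j = 0 := by
      intro j
      by_cases hj : j = 0
      · rw [hj]; exact hγ0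
      · have hjs : j ∈ s := Finset.mem_erase.2 ⟨hj, Finset.mem_univ _⟩
        exact hkey ⟨j, hjs⟩ (Finset.mem_univ _)
    exact ⟨c, fun j => by have := hall j; simp only [hγ] at this; linarith⟩
  · rw [Finset.sum_coe_sort s γ, hs, Finset.sum_erase_eq_sub (Finset.mem_univ _), hγ1, hγ0,
      sub_zero]
  · rw [Finset.sum_coe_sort s (fun j => γ j • A j), hs,
      Finset.sum_erase_eq_sub (Finset.mem_univ _), hγ2, hγ0, zero_smul, sub_zero]

open Finset in
/-- The key lemma: the faces omitting a positive-coefficient vertex cover the hull and are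
almost disjoint, so their volumes sum to the total volume. -/
lemma aux_sum_faces {n : ℕ} (hn : 1 ≤ n)
    (A : Fin (n + 2) → EuclideanSpace ℝ (Fin n))
    (hgp : InGeneralPosition A)
    (α : Fin (n + 2) → ℝ) (hα : ∀ i, α i ≠ 0)
    (hsum : ∑ i, α i = 0) (hsum2 : ∑ i, α i • A i = 0) :
    ∑ i ∈ Finset.univ.filter (fun i => 0 < α i),
        volume (convexHull ℝ (A '' {j | j ≠ i}))
      = volume (convexHull ℝ (Set.range A)) := by
  classical
  set Pos := Finset.univ.filter (fun i => 0 < α i) with hPos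
  set P : Fin (n + 2) → Set (EuclideanSpace ℝ (Fin n)) :=
    fun i => convexHull ℝ (A '' {j | j ≠ i}) with hP
  -- the positive part is nonempty
  have hPosne : Pos.Nonempty := by
    by_contra h
    rw [Finset.not_nonempty_iff_eq_empty] at h
    have hneg : ∀ i : Fin (n + 2), α i < 0 := by
      intro i
      rcases (hα i).lt_or_gt with h' | h'
      · exact h'
      · exfalso
        have : i ∈ Pos := Finset.mem_filter.2 ⟨Finset.mem_univ _, h'⟩
        rw [h] at this
        exact absurd this (Finset.notMem_empty _)
    have : ∑ i, α i < 0 :=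
      Finset.sum_neg (fun i _ => hneg i) Finset.univ_nonempty
    linarith
  -- covering
  have hcover : convexHull ℝ (Set.range A) = ⋃ i ∈ Pos, P i := by
    apply Set.Subset.antisymm
    · intro x hx
      rw [← Set.image_univ, mem_convexHull_image_iff'] at hx
      obtain ⟨w, hw0, -, hw1, hwx⟩ := hx
      obtain ⟨i, hiPos, hmin⟩ := Pos.exists_min_image (fun j => w j / α j) hPosne
      have hiα : 0 < α i := (Finset.mem_filter.1 hiPos).2
      set t := w i / α i with ht
      have ht0 : 0 ≤ t := div_nonneg (hw0 i) hiα.le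
      refine Set.mem_biUnion hiPos ?_
      rw [hP, mem_convexHull_image_iff']
      refine ⟨fun j => w j - t * α j, ?_, ?_, ?_, ?_⟩
      · intro j
        show (0:ℝ) ≤ w j - t * α j
        rcases (hα j).lt_or_gt with h' | h'
        · have : t * α j ≤ 0 := mul_nonpos_of_nonneg_of_nonpos ht0 h'.le
          have := hw0 j
          linarith
        · have hjPos : j ∈ Pos := Finset.mem_filter.2 ⟨Finset.mem_univ _, h'⟩
          have := hmin j hjPos
          rw [le_div_iff₀ h'] at this
          linarith
      · intro j hj
        have hj' : j = i := by simpa using hj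
        show w j - t * α j = 0
        rw [hj', ht, div_mul_cancel₀ _ (hα i), sub_self]
      · show ∑ j, (w j - t * α j) = 1
        rw [Finset.sum_sub_distrib, ← Finset.mul_sum, hsum, hw1, mul_zero, sub_zero]
      · show ∑ j, (w j - t * α j) • A j = x
        have : ∀ j, (w j - t * α j) • A j = w j • A j - t • (α j • A j) := by
          intro j; rw [sub_smul, mul_smul]
        simp only [this]
        rw [Finset.sum_sub_distrib, ← Finset.smul_sum, hsum2, hwx, smul_zero, sub_zero]
    · refine Set.iUnion₂_subset fun i _ => ?_
      rw [hP]
      exact convexHull_mono (by rw [← Set.image_univ]; exact Set.image_mono (f := A) (Set.subset_univ _))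
  -- a.e. disjointness
  have hdisj : ∀ i ∈ Pos, ∀ j ∈ Pos, i ≠ j → volume (P i ∩ P j) = 0 := by
    intro i hi j hj hij
    have hiα : 0 < α i := (Finset.mem_filter.1 hi).2
    have hjα : 0 < α j := (Finset.mem_filter.1 hj).2
    set K : Set (Fin (n + 2)) := {k | k ≠ i ∧ k ≠ j} with hK
    have hsubspan : P i ∩ P j ⊆ (affineSpan ℝ (A '' K) : Set (EuclideanSpace ℝ (Fin n))) := by
      rintro x ⟨hxi, hxj⟩
      rw [hP, mem_convexHull_image_iff'] at hxi hxj
      obtain ⟨w, hw0, hwi, hw1, hwx⟩ := hxi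
      obtain ⟨v, hv0, hvj, hv1, hvx⟩ := hxj
      have hwi0 : w i = 0 := hwi i (by simp)
      have hvj0 : v j = 0 := hvj j (by simp)
      obtain ⟨c, hc⟩ := dep_unique A hgp α hα hsum hsum2 (fun k => w k - v k)
        (by
          show ∑ k, (w k - v k) = 0
          rw [Finset.sum_sub_distrib, hw1, hv1, sub_self])
        (by
          show ∑ k, (w k - v k) • A k = 0
          have : ∀ k, (w k - v k) • A k = w k • A k - v k • A k := fun k => sub_smul _ _ _
          simp only [this]
          rw [Finset.sum_sub_distrib, hwx, hvx, sub_self])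
      have hci : c * α i = -(v i) := by have := hc i; rw [hwi0] at this; linarith
      have hcj : c * α j = w j := by have := hc j; rw [hvj0] at this; linarith
      have hc0 : c = 0 := by
        rcases lt_trichotomy c 0 with h | h | h
        · nlinarith [hw0 j]
        · exact h
        · nlinarith [hv0 i]
      have hwv : ∀ k, w k = v k := by
        intro k; have := hc k; rw [hc0, zero_mul] at this; linarith
      have hwj0 : w j = 0 := by rw [hwv j]; exact hvj0
      have hxK : x ∈ convexHull ℝ (A '' K) := by
        rw [mem_convexHull_image_iff']
        refine ⟨w, hw0, ?_, hw1, hwx⟩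
        intro k hk
        rw [hK] at hk
        simp only [Set.mem_setOf_eq, not_and_or, not_not] at hk
        rcases hk with rfl | rfl
        · exact hwi0
        · exact hwj0
      exact convexHull_subset_affineSpan _ hxK
    have hspan_ne_top : affineSpan ℝ (A '' K) ≠ ⊤ := by
      intro hT
      set T : Finset (Fin (n + 2)) := (Finset.univ.erase i).erase j with hT'
      have hTK : A '' K = ((T.image A : Finset (EuclideanSpace ℝ (Fin n))) :
          Set (EuclideanSpace ℝ (Fin n))) := by
        ext y
        simp only [Finset.coe_image, Set.mem_image, Finset.mem_coe, hT', Finset.mem_erase,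
          Finset.mem_univ, and_true, hK, Set.mem_setOf_eq]
        constructor
        · rintro ⟨k, ⟨hk1, hk2⟩, rfl⟩; exact ⟨k, ⟨hk2, hk1⟩, rfl⟩
        · rintro ⟨k, ⟨hk2, hk1⟩, rfl⟩; exact ⟨k, ⟨hk1, hk2⟩, rfl⟩
      have hTcard : T.card = n := by
        rw [hT', Finset.card_erase_of_mem
          (Finset.mem_erase.2 ⟨hij.symm, Finset.mem_univ _⟩),
          Finset.card_erase_of_mem (Finset.mem_univ _), Finset.card_univ, Fintype.card_fin]
        omega
      obtain ⟨n', rfl⟩ : ∃ n', n = n' + 1 := ⟨n - 1, by omega⟩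
      have hbound := finrank_vectorSpan_image_finset_le ℝ A T (n := n') hTcard
      have htop : vectorSpan ℝ (A '' K) = ⊤ := by
        rw [← direction_affineSpan, hT, AffineSubspace.direction_top]
      rw [hTK] at htop
      rw [htop] at hbound
      rw [finrank_top] at hbound
      rw [finrank_euclideanSpace_fin] at hbound
      omega
    exact measure_mono_null hsubspan
      (Measure.addHaar_affineSubspace volume _ hspan_ne_top)
  -- measurability
  have hmeas : ∀ i, NullMeasurableSet (P i) volume := by
    intro i
    have : (A '' {j | j ≠ i}).Finite := (Set.toFinite _).image A
    exact ((this.isCompact_convexHull (𝕜 := ℝ)).isClosed.measurableSet).nullMeasurableSet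
  rw [hcover, measure_biUnion_finset₀ (fun i _ j _ hij => hdisj i ‹_› j ‹_› hij)
    (fun i _ => hmeas i)]

/-- For a degenerate `(n+1)`-simplex in `ℝⁿ`, the total volume of the `n`-faces obtained by
omitting a vertex with positive coefficient equals the total volume of the `n`-faces obtained
by omitting a vertex with negative coefficient, and both equal the volume of the convex hull
of all `n+2` points. -/
theorem sum_faces_volume_eq {n : ℕ} (hn : 1 ≤ n)
    (A : Fin (n + 2) → EuclideanSpace ℝ (Fin n))
    (hgp : InGeneralPosition A)
    (α : Fin (n + 2) → ℝ) (hα : ∀ i, α i ≠ 0)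
    (hsum : ∑ i, α i = 0) (hsum2 : ∑ i, α i • A i = 0) :
    (∑ i ∈ Finset.univ.filter (fun i => 0 < α i),
        volume (convexHull ℝ (A '' {j | j ≠ i}))
      = volume (convexHull ℝ (Set.range A))) ∧
    (∑ i ∈ Finset.univ.filter (fun i => α i < 0),
        volume (convexHull ℝ (A '' {j | j ≠ i}))
      = volume (convexHull ℝ (Set.range A))) := by
  constructor
  · exact aux_sum_faces hn A hgp α hα hsum hsum2
  · have h2 := aux_sum_faces hn A hgp (fun i => -α i)
      (fun i => neg_ne_zero.2 (hα i))
      (by rw [Finset.sum_neg_distrib, hsum, neg_zero])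
      (by simp only [neg_smul]; rw [Finset.sum_neg_distrib, hsum2, neg_zero])
    have hfilter : Finset.univ.filter (fun i => α i < 0)
        = Finset.univ.filter (fun i => 0 < -α i) := by
      ext i; simp [neg_pos]
    rw [hfilter]
    exact h2
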